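/- Let N ≥ 1 and let V be a real vector space of dimension 6N. Let ω₁, ω₂ be alternating bilinear forms on V with radicals K₁ = rad(ω₁), K₂ = rad(ω₂). Assume: (joint nondegeneracy) K₁ ∩ K₂ = {0}; (mutual flatness) ω₁ vanishes identically on K₂ × K₂ and ω₂ vanishes identically on K₁ × K₁. Then rank(ω₁) ≥ 3N, rank(ω₂) ≥ 3N, and rank(ω₁) + rank(ω₂) ≥ 8N. -/

import Mathlib

lemma skew_of_alt {V : Type*} [AddCommGroup V] [Module ℝ V]
    (ω : V →ₗ[ℝ] V →ₗ[ℝ] ℝ) (halt : ∀ x : V, ω x x = 0) (x y : V) :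
    ω x y = - ω y x := by
  have h := halt (x + y)
  simp only [map_add, LinearMap.add_apply] at h
  rw [halt x, halt y] at h
  linarith

lemma key_isotropic_bound {V : Type*} [AddCommGroup V] [Module ℝ V] [FiniteDimensional ℝ V]
    (ω₁ ω₂ : V →ₗ[ℝ] V →ₗ[ℝ] ℝ)
    (halt₁ : ∀ x : V, ω₁ x x = 0)
    (hjoint : LinearMap.ker ω₁ ⊓ LinearMap.ker ω₂ = ⊥)
    (hflat₁ : ∀ x ∈ LinearMap.ker ω₂, ∀ y ∈ LinearMap.ker ω₂, ω₁ x y = 0) :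
    Module.finrank ℝ (LinearMap.ker ω₂) +
      (Module.finrank ℝ (LinearMap.ker ω₁) + Module.finrank ℝ (LinearMap.ker ω₂)) ≤
      Module.finrank ℝ V := by
  set K₁ := LinearMap.ker ω₁
  set K₂ := LinearMap.ker ω₂
  set U := K₁ ⊔ K₂ with hU
  have hmem : ∀ k : K₂, ω₁.domRestrict K₂ k ∈ U.dualAnnihilator := by
    intro k
    rw [Submodule.mem_dualAnnihilator]
    intro u hu
    rcases Submodule.mem_sup.mp hu with ⟨a, ha, b, hb, rfl⟩
    have h1 : ω₁ (k : V) a = 0 := by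
      rw [skew_of_alt ω₁ halt₁]
      have : ω₁ a = 0 := ha
      simp [this]
    have h2 : ω₁ (k : V) b = 0 := hflat₁ _ k.2 _ hb
    simp only [LinearMap.domRestrict_apply, map_add]
    rw [h1, h2, add_zero]
  let f : K₂ →ₗ[ℝ] U.dualAnnihilator :=
    LinearMap.codRestrict U.dualAnnihilator (ω₁.domRestrict K₂) hmem
  have hker : LinearMap.ker f = ⊥ := by
    rw [LinearMap.ker_codRestrict]
    ext ⟨x, hx⟩
    simp only [LinearMap.mem_ker, LinearMap.domRestrict_apply, Submodule.mem_bot]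
    constructor
    · intro h
      have : x ∈ K₁ ⊓ K₂ := ⟨h, hx⟩
      rw [hjoint] at this
      exact Subtype.ext (by simpa using this)
    · intro h
      have : x = 0 := congrArg Subtype.val h
      simp [this]
  have hinj : Function.Injective f := fun a b hab => by
    have hab' : a - b ∈ LinearMap.ker f := LinearMap.mem_ker.mpr (by rw [map_sub, hab, sub_self])
    rw [hker, Submodule.mem_bot, sub_eq_zero] at hab'
    exact hab'
  have h1 : Module.finrank ℝ K₂ ≤ Module.finrank ℝ U.dualAnnihilator :=
    LinearMap.finrank_le_finrank_of_injective hinj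
  have h2 : Module.finrank ℝ U.dualAnnihilator = Module.finrank ℝ (V ⧸ U) :=
    (Subspace.quotEquivAnnihilator U).finrank_eq.symm
  have h2' := Submodule.finrank_quotient_add_finrank U
  have h3 := Submodule.finrank_sup_add_finrank_inf_eq K₁ K₂
  rw [hjoint, finrank_bot] at h3
  have hU1 : Module.finrank ℝ (K₁ ⊔ K₂ : Submodule ℝ V) = Module.finrank ℝ U := rfl
  omega

theorem jointly_nondegenerate_mutually_flat_rank_bounds
    (N : ℕ) (hN : 1 ≤ N)
    (V : Type*) [AddCommGroup V] [Module ℝ V] [FiniteDimensional ℝ V]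
    (hdim : Module.finrank ℝ V = 6 * N)
    (ω₁ ω₂ : V →ₗ[ℝ] V →ₗ[ℝ] ℝ)
    (halt₁ : ∀ x : V, ω₁ x x = 0)
    (halt₂ : ∀ x : V, ω₂ x x = 0)
    (hjoint : LinearMap.ker ω₁ ⊓ LinearMap.ker ω₂ = ⊥)
    (hflat₁ : ∀ x ∈ LinearMap.ker ω₂, ∀ y ∈ LinearMap.ker ω₂, ω₁ x y = 0)
    (hflat₂ : ∀ x ∈ LinearMap.ker ω₁, ∀ y ∈ LinearMap.ker ω₁, ω₂ x y = 0) :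
    3 * N ≤ Module.finrank ℝ V - Module.finrank ℝ (LinearMap.ker ω₁) ∧
    3 * N ≤ Module.finrank ℝ V - Module.finrank ℝ (LinearMap.ker ω₂) ∧
    8 * N ≤ (Module.finrank ℝ V - Module.finrank ℝ (LinearMap.ker ω₁)) +
            (Module.finrank ℝ V - Module.finrank ℝ (LinearMap.ker ω₂)) := by
  have hA := key_isotropic_bound ω₁ ω₂ halt₁ hjoint hflat₁
  have hB := key_isotropic_bound ω₂ ω₁ halt₂ (by rwa [inf_comm]) hflat₂
  omega
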